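/- Let C : R^{d×d} → R^{d×d} be a deterministic contractive compressor with parameter δ ∈ (0,1], and let f_i have L_F-Lipschitz Hessian in Frobenius norm. Then for any H ∈ R^{d×d} and y, z ∈ R^d: ‖H + C(∇²f_i(y) − H) − ∇²f_i(z)‖_F² ≤ (1 − δ/4)‖H − ∇²f_i(z)‖_F² + (6/δ − 7/2) L_F² ‖y − z‖². -/

import Mathlib

attribute [local instance] Matrix.frobeniusNormedAddCommGroup Matrix.frobeniusNormedSpace

/-- Scalar inequality underlying the contractive-compressor step. -/
lemma fednl_scalar_aux (δ e l a : ℝ) (hδ0 : 0 < δ) (hδ1 : δ ≤ 1) (he0 : 0 ≤ e)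
    (hl0 : 0 ≤ l) (ha0 : 0 ≤ a) (he2 : e ^ 2 ≤ (1 - δ) * (a + l) ^ 2) :
    (e + l) ^ 2 ≤ (1 - δ / 4) * a ^ 2 + (6 / δ - 7 / 2) * l ^ 2 := by
  rcases eq_or_lt_of_le hδ1 with h1 | h1
  · subst h1
    have he : e = 0 := by nlinarith [sq_nonneg e]
    subst he
    norm_num
    nlinarith [sq_nonneg a, sq_nonneg l]
  · have hs : 0 < 1 - δ := by linarith
    have hQ' : (1 - δ) * (2 * δ * (e + l) ^ 2)
        ≤ (1 - δ) * ((2 * δ - δ ^ 2 / 2) * a ^ 2 + (12 - 8 * δ + δ ^ 2) * l ^ 2) := by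
      nlinarith [sq_nonneg (δ * e - 2 * (1 - δ) * l),
        mul_nonneg (mul_nonneg hδ0.le (by linarith : (0:ℝ) ≤ 2 - δ))
          (sub_nonneg.2 he2),
        mul_nonneg hs.le (sq_nonneg (δ * a - 2 * (2 - δ) * l))]
    have hQ : 2 * δ * (e + l) ^ 2
        ≤ (2 * δ - δ ^ 2 / 2) * a ^ 2 + (12 - 8 * δ + δ ^ 2) * l ^ 2 :=
      le_of_mul_le_mul_left hQ' hs
    have hP : 2 * δ * (e + l) ^ 2
        ≤ (2 * δ - δ ^ 2 / 2) * a ^ 2 + (12 - 7 * δ) * l ^ 2 := by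
      nlinarith [mul_nonneg (mul_nonneg hδ0.le hs.le) (sq_nonneg l)]
    have h2δ : (0:ℝ) < 2 * δ := by linarith
    rw [← mul_le_mul_iff_right₀ h2δ]
    have hE : 2 * δ * ((1 - δ / 4) * a ^ 2 + (6 / δ - 7 / 2) * l ^ 2)
        = (2 * δ - δ ^ 2 / 2) * a ^ 2 + (12 - 7 * δ) * l ^ 2 := by
      field_simp
      ring
    rw [hE]
    exact hP

/-- contractive compressor with step size `α = 1`. -/
theorem fednl_contractive_step_alpha_one {d : ℕ}
    (C : Matrix (Fin d) (Fin d) ℝ → Matrix (Fin d) (Fin d) ℝ)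
    (δ : ℝ) (hδ0 : 0 < δ) (hδ1 : δ ≤ 1)
    (hC1 : ∀ M : Matrix (Fin d) (Fin d) ℝ, ‖C M‖ ≤ ‖M‖)
    (hC2 : ∀ M : Matrix (Fin d) (Fin d) ℝ, ‖C M - M‖ ^ 2 ≤ (1 - δ) * ‖M‖ ^ 2)
    (LF : ℝ)
    (Hess : EuclideanSpace ℝ (Fin d) → Matrix (Fin d) (Fin d) ℝ)
    (hLip : ∀ x y : EuclideanSpace ℝ (Fin d), ‖Hess x - Hess y‖ ≤ LF * ‖x - y‖)
    (H : Matrix (Fin d) (Fin d) ℝ) (y z : EuclideanSpace ℝ (Fin d)) :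
    ‖H + C (Hess y - H) - Hess z‖ ^ 2
      ≤ (1 - δ / 4) * ‖H - Hess z‖ ^ 2 + (6 / δ - 7 / 2) * LF ^ 2 * ‖y - z‖ ^ 2 := by
  set e := ‖C (Hess y - H) - (Hess y - H)‖ with he_def
  set a := ‖H - Hess z‖ with ha_def
  set l := ‖Hess y - Hess z‖ with hl_def
  set l' := LF * ‖y - z‖ with hl'_def
  have hl : l ≤ l' := hLip y z
  have hl0 : 0 ≤ l := norm_nonneg _
  have hl'0 : 0 ≤ l' := hl0.trans hl
  have he0 : 0 ≤ e := norm_nonneg _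
  have ha0 : 0 ≤ a := norm_nonneg _
  -- split the iterate
  have hsplit : H + C (Hess y - H) - Hess z
      = (C (Hess y - H) - (Hess y - H)) + (Hess y - Hess z) := by abel
  have hT : ‖H + C (Hess y - H) - Hess z‖ ≤ e + l := by
    rw [hsplit]; exact norm_add_le _ _
  have hT' : ‖H + C (Hess y - H) - Hess z‖ ≤ e + l' := by linarith
  -- bound ‖Hess y - H‖
  have hm : ‖Hess y - H‖ ≤ a + l' := by
    have h1 : Hess y - H = (Hess y - Hess z) - (H - Hess z) := by abel
    have h2 : ‖Hess y - H‖ ≤ l + a := by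
      rw [h1]; exact norm_sub_le _ _
    linarith
  -- contraction bound
  have he2 : e ^ 2 ≤ (1 - δ) * (a + l') ^ 2 := by
    have h3 : e ^ 2 ≤ (1 - δ) * ‖Hess y - H‖ ^ 2 := hC2 _
    have h4 : ‖Hess y - H‖ ^ 2 ≤ (a + l') ^ 2 :=
      pow_le_pow_left₀ (norm_nonneg _) hm 2
    nlinarith [norm_nonneg (Hess y - H)]
  have hscal := fednl_scalar_aux δ e l' a hδ0 hδ1 he0 hl'0 ha0 he2
  have hsq : ‖H + C (Hess y - H) - Hess z‖ ^ 2 ≤ (e + l') ^ 2 :=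
    pow_le_pow_left₀ (norm_nonneg _) hT' 2
  have hl'2 : (6 / δ - 7 / 2) * LF ^ 2 * ‖y - z‖ ^ 2 = (6 / δ - 7 / 2) * l' ^ 2 := by
    rw [hl'_def]; ring
  rw [hl'2]
  linarith
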